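/- arXiv:1706.00607 — 4 statements merged into one kernel-verified Lean document; each statement's English description precedes it below -/
import Mathlib

section
/- Let u : ℝ² → ℝ² be twice continuously differentiable with div u = 0 everywhere, and let φ : ℝ² → ℝ be twice continuously differentiable with compact support. Then ∫_{ℝ²} ⟨((u·∇)u)(x), curl φ(x)⟩ dx = ∫_{ℝ²} (u·∇ω)(x) · φ(x) dx, where ω = curl u. (This identity shows that testing the momentum equation with curl φ produces the transport term u·∇ω of the vorticity equation.) -/
/-! STATEMENT 8: testing the convective term with curl φ produces the vorticity
transport term: ∫ ⟨(u·∇)u, curl φ⟩ = ∫ (u·∇ω) φ with ω = curl u. -/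

open MeasureTheory

/-- first partial derivative of a scalar function on ℝ². -/
noncomputable def pd1 (f : ℝ × ℝ → ℝ) (x : ℝ × ℝ) : ℝ := fderiv ℝ f x (1, 0)

/-- second partial derivative of a scalar function on ℝ². -/
noncomputable def pd2 (f : ℝ × ℝ → ℝ) (x : ℝ × ℝ) : ℝ := fderiv ℝ f x (0, 1)

/-- the convective term ((u·∇)v)ʲ = u¹∂₁vʲ + u²∂₂vʲ. -/
noncomputable def convect (u v : ℝ × ℝ → ℝ × ℝ) (x : ℝ × ℝ) : ℝ × ℝ :=
  ((u x).1 * pd1 (fun y => (v y).1) x + (u x).2 * pd2 (fun y => (v y).1) x,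
   (u x).1 * pd1 (fun y => (v y).2) x + (u x).2 * pd2 (fun y => (v y).2) x)

/-- divergence of a vector field: div v = ∂₁v¹ + ∂₂v². -/
noncomputable def divg (u : ℝ × ℝ → ℝ × ℝ) (x : ℝ × ℝ) : ℝ :=
  pd1 (fun y => (u y).1) x + pd2 (fun y => (u y).2) x

/-- scalar curl of a vector field: curl v = ∂₁v² − ∂₂v¹. -/
noncomputable def scurl (u : ℝ × ℝ → ℝ × ℝ) (x : ℝ × ℝ) : ℝ :=
  pd1 (fun y => (u y).2) x - pd2 (fun y => (u y).1) x

/-- vector curl of a scalar function: curl φ = (∂₂φ, −∂₁φ). -/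
noncomputable def vcurl (φ : ℝ × ℝ → ℝ) (x : ℝ × ℝ) : ℝ × ℝ := (pd2 φ x, -(pd1 φ x))

/-- the Euclidean inner product on ℝ². -/
def dot (a b : ℝ × ℝ) : ℝ := a.1 * b.1 + a.2 * b.2

/- ### auxiliary lemmas -/

lemma contDiff_pdv {f : ℝ × ℝ → ℝ} (hf : ContDiff ℝ 2 f) (v : ℝ × ℝ) :
    ContDiff ℝ 1 (fun x => fderiv ℝ f x v) :=
  (hf.fderiv_right (m := 1) le_rfl).clm_apply contDiff_const

lemma fderiv_fderiv_apply {f : ℝ × ℝ → ℝ} (hf : ContDiff ℝ 2 f) (x v w : ℝ × ℝ) :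
    fderiv ℝ (fun y => fderiv ℝ f y w) x v = fderiv ℝ (fderiv ℝ f) x v w := by
  rw [fderiv_clm_apply ((hf.fderiv_right (m := 1) le_rfl).differentiable one_ne_zero x)
    (differentiableAt_const w)]
  simp

lemma fderiv_symm {f : ℝ × ℝ → ℝ} (hf : ContDiff ℝ 2 f) (x v w : ℝ × ℝ) :
    fderiv ℝ (fderiv ℝ f) x v w = fderiv ℝ (fderiv ℝ f) x w v :=
  (hf.contDiffAt.isSymmSndFDerivAt (by simp)) v w

lemma fderiv_mul_apply' {f g : ℝ × ℝ → ℝ} {x : ℝ × ℝ} (v : ℝ × ℝ)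
    (hf : DifferentiableAt ℝ f x) (hg : DifferentiableAt ℝ g x) :
    fderiv ℝ (fun y => f y * g y) x v = fderiv ℝ f x v * g x + f x * fderiv ℝ g x v := by
  rw [fderiv_fun_mul hf hg]; simp; ring

lemma fderiv_add_apply' {f g : ℝ × ℝ → ℝ} {x : ℝ × ℝ} (v : ℝ × ℝ)
    (hf : DifferentiableAt ℝ f x) (hg : DifferentiableAt ℝ g x) :
    fderiv ℝ (fun y => f y + g y) x v = fderiv ℝ f x v + fderiv ℝ g x v := by
  rw [fderiv_fun_add hf hg]; simp

lemma fderiv_sub_apply' {f g : ℝ × ℝ → ℝ} {x : ℝ × ℝ} (v : ℝ × ℝ)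
    (hf : DifferentiableAt ℝ f x) (hg : DifferentiableAt ℝ g x) :
    fderiv ℝ (fun y => f y - g y) x v = fderiv ℝ f x v - fderiv ℝ g x v := by
  rw [fderiv_fun_sub hf hg]; simp

/-- Key pointwise identity: ∂₁((u·∇)u)² − ∂₂((u·∇)u)¹ = u·∇ω when div u = 0. -/
lemma key_pointwise (a b : ℝ × ℝ → ℝ) (x : ℝ × ℝ)
    (ha : ContDiff ℝ 2 a) (hb : ContDiff ℝ 2 b)
    (hdiv : fderiv ℝ a x (1, 0) + fderiv ℝ b x (0, 1) = 0) :
    fderiv ℝ (fun y => a y * fderiv ℝ b y (1, 0) + b y * fderiv ℝ b y (0, 1)) x (1, 0)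
      - fderiv ℝ (fun y => a y * fderiv ℝ a y (1, 0) + b y * fderiv ℝ a y (0, 1)) x (0, 1)
    = a x * fderiv ℝ (fun y => fderiv ℝ b y (1, 0) - fderiv ℝ a y (0, 1)) x (1, 0)
      + b x * fderiv ℝ (fun y => fderiv ℝ b y (1, 0) - fderiv ℝ a y (0, 1)) x (0, 1) := by
  have da : Differentiable ℝ a := ha.differentiable two_ne_zero
  have db : Differentiable ℝ b := hb.differentiable two_ne_zero
  have dpa : ∀ v, Differentiable ℝ (fun y => fderiv ℝ a y v) :=
    fun v => (contDiff_pdv ha v).differentiable one_ne_zero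
  have dpb : ∀ v, Differentiable ℝ (fun y => fderiv ℝ b y v) :=
    fun v => (contDiff_pdv hb v).differentiable one_ne_zero
  rw [fderiv_add_apply' _ ((da x).fun_mul ((dpb _) x)) ((db x).fun_mul ((dpb _) x)),
      fderiv_add_apply' _ ((da x).fun_mul ((dpa _) x)) ((db x).fun_mul ((dpa _) x)),
      fderiv_mul_apply' _ (da x) ((dpb _) x), fderiv_mul_apply' _ (db x) ((dpb _) x),
      fderiv_mul_apply' _ (da x) ((dpa _) x), fderiv_mul_apply' _ (db x) ((dpa _) x),
      fderiv_sub_apply' _ ((dpb _) x) ((dpa _) x), fderiv_sub_apply' _ ((dpb _) x) ((dpa _) x),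
      fderiv_fderiv_apply hb, fderiv_fderiv_apply hb, fderiv_fderiv_apply hb,
      fderiv_fderiv_apply ha, fderiv_fderiv_apply ha, fderiv_fderiv_apply ha,
      fderiv_symm hb x (0, 1) (1, 0), fderiv_symm ha x (0, 1) (1, 0)]
  linear_combination (fderiv ℝ b x (1, 0) - fderiv ℝ a x (0, 1)) * hdiv

lemma main_aux (a b φ : ℝ × ℝ → ℝ)
    (ha : ContDiff ℝ 2 a) (hb : ContDiff ℝ 2 b)
    (hdiv : ∀ x, fderiv ℝ a x (1, 0) + fderiv ℝ b x (0, 1) = 0)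
    (hφ : ContDiff ℝ 2 φ) (hφs : HasCompactSupport φ) :
    ∫ x : ℝ × ℝ, ((a x * fderiv ℝ a x (1, 0) + b x * fderiv ℝ a x (0, 1)) * fderiv ℝ φ x (0, 1)
      - (a x * fderiv ℝ b x (1, 0) + b x * fderiv ℝ b x (0, 1)) * fderiv ℝ φ x (1, 0))
    = ∫ x : ℝ × ℝ,
        (a x * fderiv ℝ (fun y => fderiv ℝ b y (1, 0) - fderiv ℝ a y (0, 1)) x (1, 0)
          + b x * fderiv ℝ (fun y => fderiv ℝ b y (1, 0) - fderiv ℝ a y (0, 1)) x (0, 1)) * φ x := by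
  have hA : ContDiff ℝ 1 (fun x => a x * fderiv ℝ a x (1, 0) + b x * fderiv ℝ a x (0, 1)) :=
    ((ha.of_le one_le_two).mul (contDiff_pdv ha _)).add
      ((hb.of_le one_le_two).mul (contDiff_pdv ha _))
  have hB : ContDiff ℝ 1 (fun x => a x * fderiv ℝ b x (1, 0) + b x * fderiv ℝ b x (0, 1)) :=
    ((ha.of_le one_le_two).mul (contDiff_pdv hb _)).add
      ((hb.of_le one_le_two).mul (contDiff_pdv hb _))
  have hφc : Continuous φ := hφ.continuous
  have hφd : Differentiable ℝ φ := hφ.differentiable two_ne_zero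
  have hint : ∀ (F G : ℝ × ℝ → ℝ), Continuous F → Continuous G →
      HasCompactSupport G → Integrable (fun x => F x * G x) := fun F G hF hG hGs =>
    (hF.mul hG).integrable_of_hasCompactSupport hGs.mul_left
  have hpd1φ : Continuous (fun x => fderiv ℝ φ x (1, 0)) := (contDiff_pdv hφ _).continuous
  have hpd2φ : Continuous (fun x => fderiv ℝ φ x (0, 1)) := (contDiff_pdv hφ _).continuous
  have hs1 : HasCompactSupport (fun x => fderiv ℝ φ x (1, 0)) := hφs.fderiv_apply ℝ _
  have hs2 : HasCompactSupport (fun x => fderiv ℝ φ x (0, 1)) := hφs.fderiv_apply ℝ _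
  have hA' : Continuous (fun x => fderiv ℝ
      (fun y => a y * fderiv ℝ a y (1, 0) + b y * fderiv ℝ a y (0, 1)) x (0, 1)) :=
    (hA.continuous_fderiv one_ne_zero).clm_apply continuous_const
  have hB' : Continuous (fun x => fderiv ℝ
      (fun y => a y * fderiv ℝ b y (1, 0) + b y * fderiv ℝ b y (0, 1)) x (1, 0)) :=
    (hB.continuous_fderiv one_ne_zero).clm_apply continuous_const
  have ibpA : ∫ x : ℝ × ℝ,
        (a x * fderiv ℝ a x (1, 0) + b x * fderiv ℝ a x (0, 1)) * fderiv ℝ φ x (0, 1)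
      = - ∫ x : ℝ × ℝ, fderiv ℝ
          (fun y => a y * fderiv ℝ a y (1, 0) + b y * fderiv ℝ a y (0, 1)) x (0, 1) * φ x :=
    integral_mul_fderiv_eq_neg_fderiv_mul_of_integrable
      (hint _ _ hA' hφc hφs) (hint _ _ hA.continuous hpd2φ hs2)
      (hint _ _ hA.continuous hφc hφs) (fun x _ => (hA.differentiable one_ne_zero) x) (fun x _ => hφd x)
  have ibpB : ∫ x : ℝ × ℝ,
        (a x * fderiv ℝ b x (1, 0) + b x * fderiv ℝ b x (0, 1)) * fderiv ℝ φ x (1, 0)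
      = - ∫ x : ℝ × ℝ, fderiv ℝ
          (fun y => a y * fderiv ℝ b y (1, 0) + b y * fderiv ℝ b y (0, 1)) x (1, 0) * φ x :=
    integral_mul_fderiv_eq_neg_fderiv_mul_of_integrable
      (hint _ _ hB' hφc hφs) (hint _ _ hB.continuous hpd1φ hs1)
      (hint _ _ hB.continuous hφc hφs) (fun x _ => (hB.differentiable one_ne_zero) x) (fun x _ => hφd x)
  rw [integral_sub (hint _ _ hA.continuous hpd2φ hs2) (hint _ _ hB.continuous hpd1φ hs1),
      ibpA, ibpB, neg_sub_neg,
      ← integral_sub (hint _ _ hB' hφc hφs) (hint _ _ hA' hφc hφs)]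
  congr 1
  funext x
  rw [← sub_mul, key_pointwise a b x ha hb (hdiv x)]

theorem convective_term_tested_with_curl (u : ℝ × ℝ → ℝ × ℝ) (φ : ℝ × ℝ → ℝ)
    (hu : ContDiff ℝ 2 u) (hdiv : ∀ x, divg u x = 0)
    (hφ : ContDiff ℝ 2 φ) (hφs : HasCompactSupport φ) :
    ∫ x : ℝ × ℝ, dot (convect u u x) (vcurl φ x) =
      ∫ x : ℝ × ℝ, ((u x).1 * pd1 (scurl u) x + (u x).2 * pd2 (scurl u) x) * φ x := by
  have hu1 : ContDiff ℝ 2 (fun y => (u y).1) := (contDiff_fst (n := 2)).comp hu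
  have hu2 : ContDiff ℝ 2 (fun y => (u y).2) := (contDiff_snd (n := 2)).comp hu
  have h := main_aux (fun y => (u y).1) (fun y => (u y).2) φ hu1 hu2 (fun x => hdiv x) hφ hφs
  calc ∫ x : ℝ × ℝ, dot (convect u u x) (vcurl φ x)
      = ∫ x : ℝ × ℝ,
        (((fun y => (u y).1) x * fderiv ℝ (fun y => (u y).1) x (1, 0)
            + (fun y => (u y).2) x * fderiv ℝ (fun y => (u y).1) x (0, 1))
              * fderiv ℝ φ x (0, 1)
          - ((fun y => (u y).1) x * fderiv ℝ (fun y => (u y).2) x (1, 0)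
            + (fun y => (u y).2) x * fderiv ℝ (fun y => (u y).2) x (0, 1))
              * fderiv ℝ φ x (1, 0)) := by
        congr 1
        funext x
        simp only [dot, convect, vcurl, pd1, pd2]
        ring
    _ = _ := by rw [h]; rfl
end

section
/- Let r ∈ ℝ. Let u : ℝ × ℝ² → ℝ² and ω : ℝ × ℝ² → ℝ be continuously differentiable, let G : ℝ² → ℝ be continuous, suppose div_x u(t,·) = 0 for every t, suppose there is a compact set K ⊂ ℝ² with supp ω(t,·) ⊆ K for all t, and suppose the damped transport equation ∂ₜω(t,x) + (u(t,·)·∇ω(t,·))(x) + r ω(t,x) = G(x) holds for all (t,x). Then the enstrophy E(t) = ∫_{ℝ²} ω(t,x)² dx is differentiable in t and satisfies the balance equation (1/2) E′(t) + r E(t) = ∫_{ℝ²} G(x) ω(t,x) dx for every t. -/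
/-! STATEMENT 9: enstrophy balance for the damped transport (vorticity) equation
∂ₜω + u·∇ω + rω = G with divergence-free u and compactly supported (in x) ω:
(1/2) E′(t) + r E(t) = ∫ G ω(t,·), where E(t) = ∫ ω(t,x)² dx. -/

open MeasureTheory

/-- Integral of the divergence of a `C¹` compactly supported vector field vanishes. -/
lemma integral_divg_eq_zero (v : ℝ × ℝ → ℝ × ℝ) (hv : ContDiff ℝ 1 v)
    {K : Set (ℝ × ℝ)} (hK : IsCompact K) (hs : Function.support v ⊆ K) :
    ∫ x : ℝ × ℝ, divg v x = 0 := by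
  obtain ⟨R0, hR0⟩ := hK.isBounded.subset_closedBall 0
  set R : ℝ := max R0 0 with hRdef
  have hKR : K ⊆ Metric.closedBall 0 R :=
    hR0.trans (Metric.closedBall_subset_closedBall (le_max_left _ _))
  -- v vanishes where ‖x‖ > R
  have hv0 : ∀ x : ℝ × ℝ, R < ‖x‖ → v x = 0 := by
    intro x hx
    by_contra h
    have hxK : x ∈ K := hs h
    have := hKR hxK
    rw [Metric.mem_closedBall, dist_zero_right] at this
    linarith
  set a : ℝ × ℝ := (-(R + 1), -(R + 1)) with ha
  set b : ℝ × ℝ := (R + 1, R + 1) with hb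
  have hR1 : (0:ℝ) ≤ R := le_max_right _ _
  have hab : a ≤ b := by
    constructor <;> simp [ha, hb] <;> linarith
  -- divergence vanishes outside K
  have hdiv0 : ∀ x ∉ K, divg v x = 0 := by
    intro x hx
    have hmem : Kᶜ ∈ nhds x := hK.isClosed.isOpen_compl.mem_nhds hx
    have hEq : v =ᶠ[nhds x] (fun _ => 0) := by
      filter_upwards [hmem] with y hy
      exact Function.notMem_support.mp fun h => hy (hs h)
    have h1 : (fun y => (v y).1) =ᶠ[nhds x] (fun _ => (0:ℝ)) := by
      filter_upwards [hEq] with y hy; simp [hy]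
    have h2 : (fun y => (v y).2) =ᶠ[nhds x] (fun _ => (0:ℝ)) := by
      filter_upwards [hEq] with y hy; simp [hy]
    simp [divg, pd1, pd2, h1.fderiv_eq, h2.fderiv_eq]
  -- K ⊆ Icc a b
  have hKI : K ⊆ Set.Icc a b := by
    intro x hx
    have hxn : ‖x‖ ≤ R := by
      have := hKR hx; rwa [Metric.mem_closedBall, dist_zero_right] at this
    have h1 : |x.1| ≤ R := le_trans (norm_fst_le x) hxn
    have h2 : |x.2| ≤ R := le_trans (norm_snd_le x) hxn
    rw [abs_le] at h1 h2
    constructor <;> constructor <;> simp [ha, hb] <;> linarith [h1.1, h1.2, h2.1, h2.2]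
  have hvd : Differentiable ℝ v := hv.differentiable one_ne_zero
  have hd1 : Differentiable ℝ (fun y => (v y).1) := hvd.fst
  have hd2 : Differentiable ℝ (fun y => (v y).2) := hvd.snd
  have hcont : Continuous (divg v) := by
    have c1 : Continuous (fun x => fderiv ℝ (fun y => (v y).1) x (1, 0)) :=
      ((hv.fst.continuous_fderiv one_ne_zero).clm_apply continuous_const)
    have c2 : Continuous (fun x => fderiv ℝ (fun y => (v y).2) x (0, 1)) :=
      ((hv.snd.continuous_fderiv one_ne_zero).clm_apply continuous_const)
    exact c1.add c2
  have key := integral_divergence_prod_Icc_of_hasFDerivAt_off_countable_of_le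
    (fun y => (v y).1) (fun y => (v y).2)
    (fun x => fderiv ℝ (fun y => (v y).1) x) (fun x => fderiv ℝ (fun y => (v y).2) x)
    a b hab ∅ Set.countable_empty
    (hv.fst.continuous.continuousOn) (hv.snd.continuous.continuousOn)
    (fun x _ => (hd1 x).hasFDerivAt) (fun x _ => (hd2 x).hasFDerivAt)
    (hcont.continuousOn.integrableOn_compact isCompact_Icc)
  have hint : (∫ x in Set.Icc a b, divg v x) = ∫ x : ℝ × ℝ, divg v x :=
    setIntegral_eq_integral_of_forall_compl_eq_zero fun x hx =>
      hdiv0 x fun hxK => hx (hKI hxK)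
  have hbd : ∀ (c : ℝ), R < |c| → (∀ y : ℝ, v (c, y) = 0) ∧ (∀ y : ℝ, v (y, c) = 0) := by
    intro c hc
    constructor <;> intro y
    · exact hv0 _ (lt_of_lt_of_le hc (norm_fst_le (c, y)))
    · exact hv0 _ (lt_of_lt_of_le hc (norm_snd_le (y, c)))
  have hRlt : R < |R + 1| := by rw [abs_of_pos (by linarith)]; linarith
  have hRlt' : R < |(-(R + 1))| := by rw [abs_neg, abs_of_pos (by linarith)]; linarith
  have e1 : ∀ x : ℝ, (v (x, b.2)).2 = 0 := fun x => by have h : v (x, b.2) = 0 := (hbd _ hRlt).2 x; rw [h]; rfl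
  have e2 : ∀ x : ℝ, (v (x, a.2)).2 = 0 := fun x => by have h : v (x, a.2) = 0 := (hbd _ hRlt').2 x; rw [h]; rfl
  have e3 : ∀ y : ℝ, (v (b.1, y)).1 = 0 := fun y => by have h : v (b.1, y) = 0 := (hbd _ hRlt).1 y; rw [h]; rfl
  have e4 : ∀ y : ℝ, (v (a.1, y)).1 = 0 := fun y => by have h : v (a.1, y) = 0 := (hbd _ hRlt').1 y; rw [h]; rfl
  have z1 : (∫ x in a.1..b.1, (v (x, b.2)).2) = 0 := by
    rw [intervalIntegral.integral_congr (g := fun _ => (0:ℝ)) (fun x _ => e1 x)]; simp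
  have z2 : (∫ x in a.1..b.1, (v (x, a.2)).2) = 0 := by
    rw [intervalIntegral.integral_congr (g := fun _ => (0:ℝ)) (fun x _ => e2 x)]; simp
  have z3 : (∫ y in a.2..b.2, (v (b.1, y)).1) = 0 := by
    rw [intervalIntegral.integral_congr (g := fun _ => (0:ℝ)) (fun y _ => e3 y)]; simp
  have z4 : (∫ y in a.2..b.2, (v (a.1, y)).1) = 0 := by
    rw [intervalIntegral.integral_congr (g := fun _ => (0:ℝ)) (fun y _ => e4 y)]; simp
  rw [← hint]
  have key2 : (∫ x in Set.Icc a b, divg v x) =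
      (((∫ x in a.1..b.1, (v (x, b.2)).2) - ∫ x in a.1..b.1, (v (x, a.2)).2)
        + ∫ y in a.2..b.2, (v (b.1, y)).1) - ∫ y in a.2..b.2, (v (a.1, y)).1 := key
  rw [key2, z1, z2, z3, z4]; ring

theorem enstrophy_balance (r : ℝ) (u : ℝ × (ℝ × ℝ) → ℝ × ℝ) (ω : ℝ × (ℝ × ℝ) → ℝ)
    (G : ℝ × ℝ → ℝ)
    (hu : ContDiff ℝ 1 u) (hω : ContDiff ℝ 1 ω) (hG : Continuous G)
    (hdiv : ∀ t : ℝ, ∀ x : ℝ × ℝ, divg (fun y => u (t, y)) x = 0)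
    (hsupp : ∃ K : Set (ℝ × ℝ), IsCompact K ∧
      ∀ t : ℝ, Function.support (fun x => ω (t, x)) ⊆ K)
    (heq : ∀ t : ℝ, ∀ x : ℝ × ℝ,
      deriv (fun s => ω (s, x)) t
        + ((u (t, x)).1 * pd1 (fun y => ω (t, y)) x
            + (u (t, x)).2 * pd2 (fun y => ω (t, y)) x)
        + r * ω (t, x) = G x) :
    ∀ t : ℝ,
      DifferentiableAt ℝ (fun s => ∫ x : ℝ × ℝ, ω (s, x) ^ 2) t ∧
      (1 / 2) * deriv (fun s => ∫ x : ℝ × ℝ, ω (s, x) ^ 2) t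
          + r * ∫ x : ℝ × ℝ, ω (t, x) ^ 2
        = ∫ x : ℝ × ℝ, G x * ω (t, x) := by
  obtain ⟨K, hK, hKsupp⟩ := hsupp
  intro t
  -- x-slices of ω are C¹
  have hωs : ∀ s : ℝ, ContDiff ℝ 1 (fun x : ℝ × ℝ => ω (s, x)) :=
    fun s => hω.comp (contDiff_const.prodMk contDiff_id)
  have hus : ContDiff ℝ 1 (fun x : ℝ × ℝ => u (t, x)) :=
    hu.comp (contDiff_const.prodMk contDiff_id)
  have hω0 : ∀ s : ℝ, ∀ x : ℝ × ℝ, x ∉ K → ω (s, x) = 0 := fun s x hx =>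
    Function.notMem_support.mp fun h => hx (hKsupp s h)
  -- time derivative of ω along s ↦ (s, x)
  set D : ℝ → ℝ × ℝ → ℝ := fun s x => fderiv ℝ ω (s, x) ((1:ℝ), ((0:ℝ), (0:ℝ))) with hD
  have hωd : ∀ s : ℝ, ∀ x : ℝ × ℝ, HasDerivAt (fun s' => ω (s', x)) (D s x) s := by
    intro s x
    have hc : HasDerivAt (fun s' : ℝ => (s', x)) ((1:ℝ), ((0:ℝ), (0:ℝ))) s := by
      have h1 := (hasDerivAt_id s).prodMk (hasDerivAt_const s x)
      exact h1
    have := ((hω.differentiable one_ne_zero (s, x)).hasFDerivAt).comp_hasDerivAt s hc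
    exact this
  have hDd : ∀ x : ℝ × ℝ, deriv (fun s => ω (s, x)) t = D t x := fun x => (hωd t x).deriv
  -- F' is the t-derivative of ω²
  set F' : ℝ → ℝ × ℝ → ℝ := fun s x => 2 * ω (s, x) * D s x with hF'
  have hder : ∀ s : ℝ, ∀ x : ℝ × ℝ, HasDerivAt (fun s' => ω (s', x) ^ 2) (F' s x) s := by
    intro s x
    have := (hωd s x).fun_pow 2
    simpa [hF', mul_comm, mul_assoc, mul_left_comm] using this
  -- continuity of F' in the pair
  have hcontF' : Continuous (fun p : ℝ × (ℝ × ℝ) => F' p.1 p.2) := by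
    have h1 : Continuous (fun p : ℝ × (ℝ × ℝ) => D p.1 p.2) := by
      have := (hω.continuous_fderiv one_ne_zero).clm_apply
        (continuous_const : Continuous fun _ : ℝ × (ℝ × ℝ) => ((1:ℝ), ((0:ℝ), (0:ℝ))))
      simpa [hD] using this
    exact (continuous_const.mul hω.continuous).mul h1
  -- F' vanishes off K
  have hF'0 : ∀ s : ℝ, ∀ x : ℝ × ℝ, x ∉ K → F' s x = 0 := by
    intro s x hx; simp [hF', hω0 s x hx]
  -- the bound
  obtain ⟨C, hC⟩ := (IsCompact.exists_bound_of_continuousOn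
    ((isCompact_Icc : IsCompact (Set.Icc (t-1) (t+1))).prod hK) hcontF'.continuousOn)
  set C' : ℝ := max C 0 with hC'
  set bound : ℝ × ℝ → ℝ := K.indicator (fun _ => C') with hbound
  have hbound_int : Integrable bound := by
    rw [hbound, integrable_indicator_iff hK.measurableSet]
    exact integrableOn_const hK.measure_lt_top.ne
  have h_bound : ∀ x : ℝ × ℝ, ∀ s ∈ Metric.ball t 1, ‖F' s x‖ ≤ bound x := by
    intro x s hs
    by_cases hx : x ∈ K
    · have hsI : s ∈ Set.Icc (t-1) (t+1) := by
        rw [Metric.mem_ball, Real.dist_eq, abs_lt] at hs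
        constructor <;> linarith [hs.1, hs.2]
      have := hC (s, x) ⟨hsI, hx⟩
      rw [hbound, Set.indicator_of_mem hx]
      exact le_trans this (le_max_left _ _)
    · rw [hbound, Set.indicator_of_notMem hx, hF'0 s x hx, norm_zero]
  -- integrability of ω(s,·)² etc.
  have hcs : ∀ (f : ℝ × ℝ → ℝ), (∀ x ∉ K, f x = 0) → Continuous f → Integrable f := by
    intro f h0 hc
    exact hc.integrable_of_hasCompactSupport (HasCompactSupport.intro hK h0)
  have hsq_int : ∀ s : ℝ, Integrable (fun x : ℝ × ℝ => ω (s, x) ^ 2) := fun s =>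
    hcs _ (fun x hx => by simp [hω0 s x hx]) ((hωs s).continuous.pow 2)
  -- differentiate under the integral
  obtain ⟨hF'int, hE⟩ := hasDerivAt_integral_of_dominated_loc_of_deriv_le
    (F := fun s x => ω (s, x) ^ 2) (F' := F') (bound := bound) (Metric.ball_mem_nhds t zero_lt_one)
    (Filter.Eventually.of_forall fun s =>
      ((hωs s).continuous.pow 2).aestronglyMeasurable)
    (hsq_int t)
    ((hcontF'.comp (continuous_const.prodMk continuous_id)).aestronglyMeasurable)
    (Filter.Eventually.of_forall fun x => h_bound x)
    hbound_int
    (Filter.Eventually.of_forall fun x s _ => hder s x)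
  refine ⟨hE.differentiableAt, ?_⟩
  rw [hE.deriv]
  -- the transport term
  set P : ℝ × ℝ → ℝ := fun x => (u (t, x)).1 * pd1 (fun y => ω (t, y)) x
      + (u (t, x)).2 * pd2 (fun y => ω (t, y)) x with hP
  have hPcont : Continuous P := by
    have c1 : Continuous fun x : ℝ × ℝ => pd1 (fun y => ω (t, y)) x :=
      ((hωs t).continuous_fderiv one_ne_zero).clm_apply continuous_const
    have c2 : Continuous fun x : ℝ × ℝ => pd2 (fun y => ω (t, y)) x :=
      ((hωs t).continuous_fderiv one_ne_zero).clm_apply continuous_const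
    exact ((hus.continuous.fst).mul c1).add ((hus.continuous.snd).mul c2)
  -- the key vector field
  set v : ℝ × ℝ → ℝ × ℝ := fun x => (ω (t, x) ^ 2) • u (t, x) with hv
  have hvC : ContDiff ℝ 1 v := ((hωs t).pow 2).smul hus
  have hvsupp : Function.support v ⊆ K := by
    intro x hx
    by_contra hxK
    apply hx
    simp [hv, hω0 t x hxK]
  have hdivv : ∀ x : ℝ × ℝ, divg v x = 2 * (ω (t, x) * P x) := by
    intro x
    have hWd : HasFDerivAt (fun y : ℝ × ℝ => ω (t, y))
        (fderiv ℝ (fun y : ℝ × ℝ => ω (t, y)) x) x :=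
      ((hωs t).differentiable one_ne_zero x).hasFDerivAt
    have hU1 : HasFDerivAt (fun y : ℝ × ℝ => (u (t, y)).1)
        (fderiv ℝ (fun y : ℝ × ℝ => (u (t, y)).1) x) x :=
      ((hus.differentiable one_ne_zero).fst x).hasFDerivAt
    have hU2 : HasFDerivAt (fun y : ℝ × ℝ => (u (t, y)).2)
        (fderiv ℝ (fun y : ℝ × ℝ => (u (t, y)).2) x) x :=
      ((hus.differentiable one_ne_zero).snd x).hasFDerivAt
    have hsq : HasFDerivAt (fun y : ℝ × ℝ => ω (t, y) ^ 2)
        (ω (t, x) • fderiv ℝ (fun y : ℝ × ℝ => ω (t, y)) x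
          + ω (t, x) • fderiv ℝ (fun y : ℝ × ℝ => ω (t, y)) x) x := by
      have := hWd.fun_mul hWd
      simpa [pow_two] using this
    have h1 : HasFDerivAt (fun y : ℝ × ℝ => (v y).1)
        ((ω (t, x) ^ 2) • fderiv ℝ (fun y : ℝ × ℝ => (u (t, y)).1) x
          + (u (t, x)).1 • (ω (t, x) • fderiv ℝ (fun y : ℝ × ℝ => ω (t, y)) x
            + ω (t, x) • fderiv ℝ (fun y : ℝ × ℝ => ω (t, y)) x)) x := by
      have := hsq.fun_mul hU1
      simpa [hv, smul_eq_mul] using this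
    have h2 : HasFDerivAt (fun y : ℝ × ℝ => (v y).2)
        ((ω (t, x) ^ 2) • fderiv ℝ (fun y : ℝ × ℝ => (u (t, y)).2) x
          + (u (t, x)).2 • (ω (t, x) • fderiv ℝ (fun y : ℝ × ℝ => ω (t, y)) x
            + ω (t, x) • fderiv ℝ (fun y : ℝ × ℝ => ω (t, y)) x)) x := by
      have := hsq.fun_mul hU2
      simpa [hv, smul_eq_mul] using this
    have hd := hdiv t x
    rw [divg, pd1, pd2] at hd ⊢
    rw [h1.fderiv, h2.fderiv]
    simp only [ContinuousLinearMap.add_apply, ContinuousLinearMap.smul_apply, smul_eq_mul]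
    have hPx : P x = (u (t, x)).1 * pd1 (fun y => ω (t, y)) x
        + (u (t, x)).2 * pd2 (fun y => ω (t, y)) x := rfl
    rw [hPx]
    simp only [pd1, pd2]
    nlinarith [hd]
  have hA : (∫ x : ℝ × ℝ, ω (t, x) * P x) = 0 := by
    have h0 := integral_divg_eq_zero v hvC hK hvsupp
    have : (∫ x : ℝ × ℝ, divg v x) = 2 * ∫ x : ℝ × ℝ, ω (t, x) * P x := by
      rw [← integral_const_mul]
      exact integral_congr_ae (Filter.Eventually.of_forall hdivv)
    rw [this] at h0
    linarith
  -- rewrite integrand of F' t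
  have hGω_int : Integrable (fun x : ℝ × ℝ => G x * ω (t, x)) :=
    hcs _ (fun x hx => by simp [hω0 t x hx]) (hG.mul (hωs t).continuous)
  have hP_int : Integrable (fun x : ℝ × ℝ => ω (t, x) * P x) :=
    hcs _ (fun x hx => by simp [hω0 t x hx]) ((hωs t).continuous.mul hPcont)
  have hptwise : ∀ x : ℝ × ℝ, F' t x =
      2 * (G x * ω (t, x)) - 2 * (ω (t, x) * P x) - 2 * r * (ω (t, x) ^ 2) := by
    intro x
    have h := heq t x
    have hPx : P x = (u (t, x)).1 * pd1 (fun y => ω (t, y)) x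
        + (u (t, x)).2 * pd2 (fun y => ω (t, y)) x := rfl
    rw [hDd x, ← hPx] at h
    have hDval : D t x = G x - P x - r * ω (t, x) := by linarith
    show 2 * ω (t, x) * D t x = _
    rw [hDval]; ring
  have hInt_eq : (∫ x : ℝ × ℝ, F' t x) =
      2 * (∫ x : ℝ × ℝ, G x * ω (t, x)) - 2 * (∫ x : ℝ × ℝ, ω (t, x) * P x)
        - 2 * r * (∫ x : ℝ × ℝ, ω (t, x) ^ 2) := by
    have step1 : (∫ x : ℝ × ℝ, F' t x) =
        ∫ x : ℝ × ℝ, (2 * (G x * ω (t, x)) - 2 * (ω (t, x) * P x)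
          - 2 * r * (ω (t, x) ^ 2)) :=
      integral_congr_ae (Filter.Eventually.of_forall fun x => hptwise x)
    have iA : Integrable (fun x : ℝ × ℝ =>
        2 * (G x * ω (t, x)) - 2 * (ω (t, x) * P x)) :=
      ((hGω_int.const_mul 2)).sub (hP_int.const_mul 2)
    rw [step1, integral_sub iA ((hsq_int t).const_mul (2*r)),
      integral_sub (hGω_int.const_mul 2) (hP_int.const_mul 2),
      integral_const_mul, integral_const_mul, integral_const_mul]
  rw [hInt_eq, hA]
  ring
end

section
/- Let r ∈ ℝ. Let u : ℝ × ℝ² → ℝ² be continuously differentiable with div_x u(t,·) = 0 for every t, let p : ℝ × ℝ² → ℝ be continuously differentiable, let g : ℝ² → ℝ² be continuous, suppose there is a compact set K ⊂ ℝ² with supp u(t,·) ⊆ K for all t, and suppose ∂ₜu + (u·∇)u + ∇_x p + r u = g holds pointwise on ℝ × ℝ². Then the energy E(t) = ∫_{ℝ²} |u(t,x)|² dx is differentiable in t and satisfies the balance equation (1/2) E′(t) + r E(t) = ∫_{ℝ²} ⟨g(x), u(t,x)⟩ dx for every t. -/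
/-! STATEMENT 10: energy balance for the damped Euler system
∂ₜu + (u·∇)u + ∇p + ru = g with divergence-free, compactly (in x) supported u:
(1/2) E′(t) + r E(t) = ∫ ⟨g, u(t,·)⟩, where E(t) = ∫ |u(t,x)|² dx. -/

open MeasureTheory

-- helper: fderiv vanishes off a closed set containing the support
lemma fderiv_zero_off {f : ℝ × ℝ → ℝ} {K : Set (ℝ × ℝ)} (hK : IsClosed K)
    (hs : Function.support f ⊆ K) {x : ℝ × ℝ} (hx : x ∉ K) : fderiv ℝ f x = 0 := by
  have hev : f =ᶠ[nhds x] (fun _ => (0:ℝ)) := by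
    filter_upwards [hK.isOpen_compl.mem_nhds hx] with y hy
    by_contra h
    exact hy (hs h)
  rw [hev.fderiv_eq]
  exact fderiv_const_apply 0

-- helper: integrable of continuous function supported in compact K
lemma integrable_of_support_subset {f : ℝ × ℝ → ℝ} (hf : Continuous f)
    {K : Set (ℝ × ℝ)} (hK : IsCompact K) (hs : Function.support f ⊆ K) :
    Integrable f := by
  refine hf.integrable_of_hasCompactSupport (HasCompactSupport.intro hK ?_)
  intro x hx
  by_contra h
  exact hx (hs h)

-- helper: divergence theorem, compactly supported C¹ field has zero integral of divergence
lemma integral_div_zero (f g : ℝ × ℝ → ℝ) (hf : ContDiff ℝ 1 f) (hg : ContDiff ℝ 1 g)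
    {K : Set (ℝ × ℝ)} (hK : IsCompact K) (hfs : Function.support f ⊆ K)
    (hgs : Function.support g ⊆ K) :
    ∫ x : ℝ × ℝ, (fderiv ℝ f x (1, 0) + fderiv ℝ g x (0, 1)) = 0 := by
  obtain ⟨R₀, hR₀⟩ := hK.isBounded.subset_closedBall 0
  set R : ℝ := max R₀ 0 with hRdef
  have hR : K ⊆ Metric.closedBall 0 R :=
    hR₀.trans (Metric.closedBall_subset_closedBall (le_max_left _ _))
  have hR0 : (0:ℝ) ≤ R := le_max_right _ _
  set a : ℝ × ℝ := (-(R+1), -(R+1)) with ha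
  set b : ℝ × ℝ := (R+1, R+1) with hb
  have hnotK : ∀ z : ℝ × ℝ, R < |z.1| ∨ R < |z.2| → z ∉ K := by
    intro z hz hzK
    have := hR hzK
    rw [Metric.mem_closedBall, dist_zero_right, Prod.norm_def] at this
    simp only [Real.norm_eq_abs, max_le_iff] at this
    rcases hz with h | h <;> linarith [this.1, this.2]
  have hKIcc : K ⊆ Set.Icc a b := by
    intro z hz
    have := hR hz
    rw [Metric.mem_closedBall, dist_zero_right, Prod.norm_def] at this
    simp only [Real.norm_eq_abs, max_le_iff] at this
    obtain ⟨h1, h2⟩ := this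
    rw [abs_le] at h1 h2
    constructor
    · exact ⟨by simpa [ha] using by linarith [h1.1], by simpa [ha] using by linarith [h2.1]⟩
    · exact ⟨by simpa [hb] using by linarith [h1.2], by simpa [hb] using by linarith [h2.2]⟩
  have hle : a ≤ b := ⟨by simp [ha, hb]; linarith, by simp [ha, hb]; linarith⟩
  have hdf : Differentiable ℝ f := hf.differentiable one_ne_zero
  have hdg : Differentiable ℝ g := hg.differentiable one_ne_zero
  have hcont : Continuous fun x : ℝ × ℝ => fderiv ℝ f x (1, 0) + fderiv ℝ g x (0, 1) :=
    ((hf.continuous_fderiv one_ne_zero).clm_apply continuous_const).add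
      ((hg.continuous_fderiv one_ne_zero).clm_apply continuous_const)
  have hdivsupp : ∀ x ∉ K, fderiv ℝ f x (1, 0) + fderiv ℝ g x (0, 1) = 0 := by
    intro x hx
    rw [fderiv_zero_off hK.isClosed hfs hx, fderiv_zero_off hK.isClosed hgs hx]
    simp
  have key := integral_divergence_prod_Icc_of_hasFDerivAt_off_countable_of_le f g
    (fun x => fderiv ℝ f x) (fun x => fderiv ℝ g x) a b hle ∅ Set.countable_empty
    hf.continuous.continuousOn hg.continuous.continuousOn
    (fun x _ => (hdf x).hasFDerivAt) (fun x _ => (hdg x).hasFDerivAt)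
    (hcont.locallyIntegrable.integrableOn_isCompact isCompact_Icc)
  -- boundary terms vanish
  have hgb : ∀ x : ℝ, g (x, b.2) = 0 := by
    intro x
    by_contra h
    exact hnotK (x, b.2) (Or.inr (by simp [hb]; rw [abs_of_nonneg] <;> linarith)) (hgs h)
  have hga : ∀ x : ℝ, g (x, a.2) = 0 := by
    intro x
    by_contra h
    exact hnotK (x, a.2) (Or.inr (by simp [ha]; rw [abs_of_nonpos] <;> linarith)) (hgs h)
  have hfb : ∀ y : ℝ, f (b.1, y) = 0 := by
    intro y
    by_contra h
    exact hnotK (b.1, y) (Or.inl (by simp [hb]; rw [abs_of_nonneg] <;> linarith)) (hfs h)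
  have hfa : ∀ y : ℝ, f (a.1, y) = 0 := by
    intro y
    by_contra h
    exact hnotK (a.1, y) (Or.inl (by simp [ha]; rw [abs_of_nonpos] <;> linarith)) (hfs h)
  rw [show (fun x : ℝ => g (x, b.2)) = fun _ => (0:ℝ) from funext hgb,
    show (fun x : ℝ => g (x, a.2)) = fun _ => (0:ℝ) from funext hga,
    show (fun y : ℝ => f (b.1, y)) = fun _ => (0:ℝ) from funext hfb,
    show (fun y : ℝ => f (a.1, y)) = fun _ => (0:ℝ) from funext hfa] at key
  simp only [intervalIntegral.integral_zero, sub_zero, zero_sub, add_zero, zero_add, neg_zero] at key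
  rw [← setIntegral_eq_integral_of_forall_compl_eq_zero
    (fun x hx => hdivsupp x (fun hK' => hx (hKIcc hK')))]
  exact key

theorem energy_balance (r : ℝ) (u : ℝ × (ℝ × ℝ) → ℝ × ℝ) (p : ℝ × (ℝ × ℝ) → ℝ)
    (g : ℝ × ℝ → ℝ × ℝ)
    (hu : ContDiff ℝ 1 u) (hp : ContDiff ℝ 1 p) (hg : Continuous g)
    (hdiv : ∀ t : ℝ, ∀ x : ℝ × ℝ, divg (fun y => u (t, y)) x = 0)
    (hsupp : ∃ K : Set (ℝ × ℝ), IsCompact K ∧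
      ∀ t : ℝ, Function.support (fun x => u (t, x)) ⊆ K)
    (heq : ∀ t : ℝ, ∀ x : ℝ × ℝ,
      (deriv (fun s => (u (s, x)).1) t
          + ((u (t, x)).1 * pd1 (fun y => (u (t, y)).1) x
              + (u (t, x)).2 * pd2 (fun y => (u (t, y)).1) x)
          + pd1 (fun y => p (t, y)) x + r * (u (t, x)).1,
       deriv (fun s => (u (s, x)).2) t
          + ((u (t, x)).1 * pd1 (fun y => (u (t, y)).2) x
              + (u (t, x)).2 * pd2 (fun y => (u (t, y)).2) x)
          + pd2 (fun y => p (t, y)) x + r * (u (t, x)).2) = g x) :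
    ∀ t : ℝ,
      DifferentiableAt ℝ (fun s => ∫ x : ℝ × ℝ, ((u (s, x)).1 ^ 2 + (u (s, x)).2 ^ 2)) t ∧
      (1 / 2) * deriv (fun s => ∫ x : ℝ × ℝ, ((u (s, x)).1 ^ 2 + (u (s, x)).2 ^ 2)) t
          + r * ∫ x : ℝ × ℝ, ((u (t, x)).1 ^ 2 + (u (t, x)).2 ^ 2)
        = ∫ x : ℝ × ℝ, dot (g x) (u (t, x)) := by
  obtain ⟨K, hKc, hKs⟩ := hsupp
  intro t
  have hud : Differentiable ℝ u := hu.differentiable one_ne_zero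
  have hucont : Continuous u := hu.continuous
  -- time derivative density
  set D : ℝ × (ℝ × ℝ) → ℝ := fun q =>
    2 * ((u q).1 * (fderiv ℝ u q ((1:ℝ), ((0:ℝ), (0:ℝ)))).1
       + (u q).2 * (fderiv ℝ u q ((1:ℝ), ((0:ℝ), (0:ℝ)))).2) with hD_def
  have hDcont : Continuous D := by
    have h1 : Continuous fun q : ℝ × (ℝ × ℝ) => fderiv ℝ u q ((1:ℝ), ((0:ℝ),(0:ℝ))) :=
      (hu.continuous_fderiv one_ne_zero).clm_apply continuous_const
    exact continuous_const.mul
      (((continuous_fst.comp hucont).mul (continuous_fst.comp h1)).add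
        ((continuous_snd.comp hucont).mul (continuous_snd.comp h1)))
  -- the basic hasDerivAt in time
  have hpath : ∀ (s : ℝ) (x : ℝ × ℝ), HasDerivAt (fun s' => u (s', x))
      (fderiv ℝ u (s, x) ((1:ℝ), ((0:ℝ),(0:ℝ)))) s := by
    intro s x
    have hmk : HasDerivAt (fun s' : ℝ => (s', x)) ((1:ℝ), ((0:ℝ),(0:ℝ))) s :=
      (hasDerivAt_id s).prodMk (hasDerivAt_const s x)
    exact (hud (s, x)).hasFDerivAt.comp_hasDerivAt s hmk
  have hF_hasDeriv : ∀ (s : ℝ) (x : ℝ × ℝ),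
      HasDerivAt (fun s' => ((u (s', x)).1 ^ 2 + (u (s', x)).2 ^ 2)) (D (s, x)) s := by
    intro s x
    have h1 : HasDerivAt (fun s' => (u (s', x)).1)
        (fderiv ℝ u (s, x) ((1:ℝ), ((0:ℝ),(0:ℝ)))).1 s :=
      ((ContinuousLinearMap.fst ℝ ℝ ℝ).hasFDerivAt).comp_hasDerivAt s (hpath s x)
    have h2 : HasDerivAt (fun s' => (u (s', x)).2)
        (fderiv ℝ u (s, x) ((1:ℝ), ((0:ℝ),(0:ℝ)))).2 s :=
      ((ContinuousLinearMap.snd ℝ ℝ ℝ).hasFDerivAt).comp_hasDerivAt s (hpath s x)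
    have := ((h1.fun_pow 2).fun_add (h2.fun_pow 2))
    refine this.congr_deriv ?_
    simp [hD_def]
    ring
  -- boundedness
  obtain ⟨M, hM⟩ := (IsCompact.exists_bound_of_continuousOn
    ((isCompact_Icc (a := t - 1) (b := t + 1)).prod hKc) hDcont.continuousOn)
  have hsuppF : ∀ (s : ℝ) (x : ℝ × ℝ), x ∉ K → u (s, x) = 0 := by
    intro s x hx
    by_contra h
    exact hx (hKs s h)
  have key := hasDerivAt_integral_of_dominated_loc_of_deriv_le (μ := (volume : Measure (ℝ × ℝ)))
    (F := fun s x => ((u (s, x)).1 ^ 2 + (u (s, x)).2 ^ 2))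
    (F' := fun s x => D (s, x)) (bound := K.indicator fun _ => M)
    (x₀ := t) (s := Metric.ball t 1) (Metric.ball_mem_nhds t one_pos)
    (Filter.Eventually.of_forall fun s =>
      (((continuous_fst.comp (hucont.comp (continuous_const.prodMk continuous_id))).pow 2).add
        ((continuous_snd.comp (hucont.comp (continuous_const.prodMk continuous_id))).pow 2)).aestronglyMeasurable)
    (by
      apply integrable_of_support_subset ?_ hKc
      · intro x hx
        simp only [Function.mem_support, ne_eq] at hx
        by_contra hxK
        exact hx (by rw [hsuppF t x hxK]; simp)
      · exact ((continuous_fst.comp (hucont.comp (continuous_const.prodMk continuous_id))).pow 2).add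
          ((continuous_snd.comp (hucont.comp (continuous_const.prodMk continuous_id))).pow 2))
    ((hDcont.comp (continuous_const.prodMk continuous_id)).aestronglyMeasurable)
    (Filter.Eventually.of_forall (fun x => by
      intro s hs
      by_cases hxK : x ∈ K
      · rw [Set.indicator_of_mem hxK]
        refine hM (s, x) ⟨?_, hxK⟩
        rw [Metric.mem_ball, Real.dist_eq, abs_lt] at hs
        constructor <;> simp <;> linarith [hs.1, hs.2]
      · rw [Set.indicator_of_notMem hxK]
        have h0 : u (s, x) = 0 := hsuppF s x hxK
        simp [hD_def, h0]))
    (by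
      refine (integrableOn_const hKc.measure_lt_top.ne).integrable_indicator
        hKc.isClosed.measurableSet)
    (Filter.Eventually.of_forall fun x _ _ => hF_hasDeriv _ x)
  obtain ⟨hDint, hEderiv⟩ := key
  refine ⟨hEderiv.differentiableAt, ?_⟩
  rw [hEderiv.deriv]
  -- fixed-time slices
  set v1 : ℝ × ℝ → ℝ := fun y => (u (t, y)).1 with hv1_def
  set v2 : ℝ × ℝ → ℝ := fun y => (u (t, y)).2 with hv2_def
  set pt : ℝ × ℝ → ℝ := fun y => p (t, y) with hpt_def
  have hslice : ContDiff ℝ 1 (fun y : ℝ × ℝ => u (t, y)) :=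
    hu.comp (contDiff_const.prodMk contDiff_id)
  have hv1 : ContDiff ℝ 1 v1 := (contDiff_fst.comp hslice)
  have hv2 : ContDiff ℝ 1 v2 := (contDiff_snd.comp hslice)
  have hptc : ContDiff ℝ 1 pt := hp.comp (contDiff_const.prodMk contDiff_id)
  set φ : ℝ × ℝ → ℝ := fun y => pt y + (v1 y * v1 y + v2 y * v2 y) * (1/2) with hφ_def
  have hφc : ContDiff ℝ 1 φ :=
    hptc.add (((hv1.mul hv1).add (hv2.mul hv2)).mul contDiff_const)
  set f : ℝ × ℝ → ℝ := fun y => φ y * v1 y with hf_def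
  set gg : ℝ × ℝ → ℝ := fun y => φ y * v2 y with hgg_def
  have hfc : ContDiff ℝ 1 f := hφc.mul hv1
  have hggc : ContDiff ℝ 1 gg := hφc.mul hv2
  have hfs : Function.support f ⊆ K := by
    intro x hx
    by_contra hxK
    have h0 : u (t, x) = 0 := hsuppF t x hxK
    exact hx (by simp [hf_def, hv1_def, h0])
  have hggs : Function.support gg ⊆ K := by
    intro x hx
    by_contra hxK
    have h0 : u (t, x) = 0 := hsuppF t x hxK
    exact hx (by simp [hgg_def, hv2_def, h0])
  have hzero := integral_div_zero f gg hfc hggc hKc hfs hggs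
  -- pointwise identity
  have hpoint : ∀ x : ℝ × ℝ, dot (g x) (u (t, x)) =
      (1/2) * D (t, x) + ((fderiv ℝ f x (1, 0) + fderiv ℝ gg x (0, 1))
        + r * ((u (t, x)).1 ^ 2 + (u (t, x)).2 ^ 2)) := by
    intro x
    have hg1 : (g x).1 = deriv (fun s => (u (s, x)).1) t
          + ((u (t, x)).1 * pd1 (fun y => (u (t, y)).1) x
              + (u (t, x)).2 * pd2 (fun y => (u (t, y)).1) x)
          + pd1 (fun y => p (t, y)) x + r * (u (t, x)).1 :=
      (congrArg Prod.fst (heq t x)).symm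
    have hg2 : (g x).2 = deriv (fun s => (u (s, x)).2) t
          + ((u (t, x)).1 * pd1 (fun y => (u (t, y)).2) x
              + (u (t, x)).2 * pd2 (fun y => (u (t, y)).2) x)
          + pd2 (fun y => p (t, y)) x + r * (u (t, x)).2 :=
      (congrArg Prod.snd (heq t x)).symm
    -- identify time derivatives
    have hd1 : deriv (fun s => (u (s, x)).1) t
        = (fderiv ℝ u (t, x) ((1:ℝ), ((0:ℝ),(0:ℝ)))).1 :=
      (((ContinuousLinearMap.fst ℝ ℝ ℝ).hasFDerivAt).comp_hasDerivAt t (hpath t x)).deriv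
    have hd2 : deriv (fun s => (u (s, x)).2) t
        = (fderiv ℝ u (t, x) ((1:ℝ), ((0:ℝ),(0:ℝ)))).2 :=
      (((ContinuousLinearMap.snd ℝ ℝ ℝ).hasFDerivAt).comp_hasDerivAt t (hpath t x)).deriv
    set d1 := (fderiv ℝ u (t, x) ((1:ℝ), ((0:ℝ),(0:ℝ)))).1
    set d2 := (fderiv ℝ u (t, x) ((1:ℝ), ((0:ℝ),(0:ℝ)))).2
    -- differentiability facts at x
    have hv1d : DifferentiableAt ℝ v1 x := (hv1.differentiable one_ne_zero) x
    have hv2d : DifferentiableAt ℝ v2 x := (hv2.differentiable one_ne_zero) x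
    have hptd : DifferentiableAt ℝ pt x := (hptc.differentiable one_ne_zero) x
    have hφd : DifferentiableAt ℝ φ x := (hφc.differentiable one_ne_zero) x
    -- fderiv computations
    have hmul : ∀ (a b : ℝ × ℝ → ℝ), DifferentiableAt ℝ a x → DifferentiableAt ℝ b x →
        ∀ w : ℝ × ℝ, fderiv ℝ (fun y => a y * b y) x w
          = a x * fderiv ℝ b x w + b x * fderiv ℝ a x w := by
      intro a b ha hb w
      rw [fderiv_fun_mul ha hb]
      simp
    have hφw : ∀ w : ℝ × ℝ, fderiv ℝ φ x w = fderiv ℝ pt x w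
        + (v1 x * fderiv ℝ v1 x w + v2 x * fderiv ℝ v2 x w) := by
      intro w
      rw [hφ_def]
      rw [fderiv_fun_add hptd (((hv1d.fun_mul hv1d).fun_add (hv2d.fun_mul hv2d)).mul_const _)]
      rw [ContinuousLinearMap.add_apply]
      rw [fderiv_mul_const ((hv1d.fun_mul hv1d).fun_add (hv2d.fun_mul hv2d))]
      rw [ContinuousLinearMap.smul_apply]
      rw [fderiv_fun_add (hv1d.fun_mul hv1d) (hv2d.fun_mul hv2d), ContinuousLinearMap.add_apply]
      rw [hmul v1 v1 hv1d hv1d, hmul v2 v2 hv2d hv2d]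
      simp only [smul_eq_mul]
      ring
    have hfw : fderiv ℝ f x (1, 0)
        = φ x * fderiv ℝ v1 x (1, 0) + v1 x * fderiv ℝ φ x (1, 0) := hmul φ v1 hφd hv1d _
    have hggw : fderiv ℝ gg x (0, 1)
        = φ x * fderiv ℝ v2 x (0, 1) + v2 x * fderiv ℝ φ x (0, 1) := hmul φ v2 hφd hv2d _
    have hdivx : fderiv ℝ v1 x (1, 0) + fderiv ℝ v2 x (0, 1) = 0 := hdiv t x
    have hDval : D (t, x) = 2 * (v1 x * d1 + v2 x * d2) := rfl
    have hpd1 : ∀ h : ℝ × ℝ → ℝ, pd1 h x = fderiv ℝ h x (1, 0) := fun _ => rfl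
    have hpd2 : ∀ h : ℝ × ℝ → ℝ, pd2 h x = fderiv ℝ h x (0, 1) := fun _ => rfl
    have huv1 : (u (t, x)).1 = v1 x := rfl
    have huv2 : (u (t, x)).2 = v2 x := rfl
    rw [dot, hg1, hg2, hd1, hd2, hDval, hfw, hggw, hφw, hφw]
    rw [hpd1, hpd1, hpd1, hpd2, hpd2, hpd2, huv1, huv2]
    have hpt1 : fderiv ℝ (fun y => p (t, y)) x = fderiv ℝ pt x := rfl
    have hu1 : fderiv ℝ (fun y => (u (t, y)).1) x = fderiv ℝ v1 x := rfl
    have hu2 : fderiv ℝ (fun y => (u (t, y)).2) x = fderiv ℝ v2 x := rfl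
    rw [hpt1, hu1, hu2]
    linear_combination (-(φ x)) * hdivx
  -- assemble
  have hFint : Integrable (fun x : ℝ × ℝ => ((u (t, x)).1 ^ 2 + (u (t, x)).2 ^ 2)) := by
    apply integrable_of_support_subset ?_ hKc
    · intro x hx
      by_contra hxK
      exact hx (by simp [hsuppF t x hxK])
    · exact ((continuous_fst.comp (hucont.comp (continuous_const.prodMk continuous_id))).pow 2).add
        ((continuous_snd.comp (hucont.comp (continuous_const.prodMk continuous_id))).pow 2)
  have hdivcont : Continuous fun x : ℝ × ℝ => fderiv ℝ f x (1, 0) + fderiv ℝ gg x (0, 1) :=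
    ((hfc.continuous_fderiv one_ne_zero).clm_apply continuous_const).add
      ((hggc.continuous_fderiv one_ne_zero).clm_apply continuous_const)
  have hdivsupp : Function.support (fun x : ℝ × ℝ => fderiv ℝ f x (1, 0) + fderiv ℝ gg x (0, 1)) ⊆ K := by
    intro x hx
    by_contra hxK
    apply hx
    simp only [fderiv_zero_off hKc.isClosed hfs hxK, fderiv_zero_off hKc.isClosed hggs hxK]
    simp
  have hdivint : Integrable (fun x : ℝ × ℝ => fderiv ℝ f x (1, 0) + fderiv ℝ gg x (0, 1)) :=
    integrable_of_support_subset hdivcont hKc hdivsupp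
  have hDtint : Integrable (fun x : ℝ × ℝ => D (t, x)) := hDint
  calc (1/2) * (∫ x : ℝ × ℝ, D (t, x)) + r * ∫ x : ℝ × ℝ, ((u (t, x)).1 ^ 2 + (u (t, x)).2 ^ 2)
      = ∫ x : ℝ × ℝ, ((1/2) * D (t, x) + ((fderiv ℝ f x (1, 0) + fderiv ℝ gg x (0, 1))
          + r * ((u (t, x)).1 ^ 2 + (u (t, x)).2 ^ 2))) := by
        have h2 : Integrable (fun x : ℝ × ℝ => r * ((u (t, x)).1 ^ 2 + (u (t, x)).2 ^ 2)) :=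
          hFint.const_mul r
        have h1 : Integrable (fun x : ℝ × ℝ => (1/2 : ℝ) * D (t, x)) := hDtint.const_mul _
        have h3 : Integrable (fun x : ℝ × ℝ => (fderiv ℝ f x (1, 0) + fderiv ℝ gg x (0, 1))
            + r * ((u (t, x)).1 ^ 2 + (u (t, x)).2 ^ 2)) := hdivint.add h2
        have hDhalf : ∫ a : ℝ × ℝ, (1/2 : ℝ) * D (t, a) = (1/2) * ∫ a : ℝ × ℝ, D (t, a) :=
          integral_const_mul _ _
        have hrF : ∫ a : ℝ × ℝ, r * ((u (t, a)).1 ^ 2 + (u (t, a)).2 ^ 2)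
            = r * ∫ a : ℝ × ℝ, ((u (t, a)).1 ^ 2 + (u (t, a)).2 ^ 2) := integral_const_mul _ _
        rw [integral_add h1 h3, integral_add hdivint h2, hzero, hDhalf, hrF]
        ring
    _ = ∫ x : ℝ × ℝ, dot (g x) (u (t, x)) := by
        exact integral_congr_ae (Filter.Eventually.of_forall fun x => (hpoint x).symm)
end

section
/- Let r > 0, let h : ℝ → ℝ be continuous and bounded on (−∞, 0], and let y : ℝ → ℝ be differentiable and bounded on (−∞, 0] with (1/2) y′(t) + r y(t) = h(t) for all t ∈ ℝ. Then the function t ↦ e^{2rt} h(t) is integrable on (−∞, 0] and y(0) = 2 ∫_{−∞}^{0} e^{2rt} h(t) dt. (This representation of the value of a complete bounded trajectory in terms of its history is the key identity in the proofs of asymptotic compactness and of the upper semicontinuity of the attractors.) -/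
/-! STATEMENT 14: representation of the value of a complete bounded trajectory:
if (1/2)y′ + ry = h on ℝ with y and h bounded on (−∞,0], then
t ↦ e^{2rt} h(t) is integrable on (−∞,0] and y(0) = 2 ∫_{−∞}^{0} e^{2rt} h(t) dt. -/

open MeasureTheory

theorem complete_trajectory_representation (r : ℝ) (hr : 0 < r) (h y : ℝ → ℝ)
    (hh : Continuous h) (hhb : ∃ M : ℝ, ∀ t ≤ (0 : ℝ), |h t| ≤ M)
    (hy : Differentiable ℝ y) (hyb : ∃ M : ℝ, ∀ t ≤ (0 : ℝ), |y t| ≤ M)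
    (heq : ∀ t : ℝ, (1 / 2) * deriv y t + r * y t = h t) :
    IntegrableOn (fun t => Real.exp (2 * r * t) * h t) (Set.Iic 0) ∧
      y 0 = 2 * ∫ t in Set.Iic (0 : ℝ), Real.exp (2 * r * t) * h t := by
  obtain ⟨M, hM⟩ := hhb
  obtain ⟨N, hN⟩ := hyb
  have hr2 : (0:ℝ) < 2 * r := by linarith
  set M' := max M 0 with hM'
  have hM'0 : 0 ≤ M' := le_max_right _ _
  have hMb : ∀ t ≤ (0:ℝ), |h t| ≤ M' := fun t ht => (hM t ht).trans (le_max_left _ _)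
  -- derivative of t ↦ exp(2rt)
  have Dexp : ∀ x : ℝ, HasDerivAt (fun t => Real.exp (2 * r * t))
      (2 * r * Real.exp (2 * r * x)) x := by
    intro x
    have := (Real.hasDerivAt_exp (2 * r * x)).comp x
      ((hasDerivAt_id x).const_mul (2 * r))
    exact this.congr_deriv (by ring)
  -- antiderivative of exp(2rt)
  have Dexp' : ∀ x : ℝ, HasDerivAt (fun t => Real.exp (2 * r * t) / (2 * r))
      (Real.exp (2 * r * x)) x := by
    intro x
    have := (Dexp x).div_const (2 * r)
    simpa [mul_div_assoc, mul_div_cancel_left₀ _ hr2.ne'] using this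
  have hcont : Continuous fun t => Real.exp (2 * r * t) * h t :=
    (Real.continuous_exp.comp (continuous_const.mul continuous_id)).mul hh
  -- integrability
  have hint : IntegrableOn (fun t => Real.exp (2 * r * t) * h t) (Set.Iic 0) := by
    refine integrableOn_Iic_of_intervalIntegral_norm_bounded (M' / (2 * r)) (0:ℝ)
      (fun i => (hcont.integrableOn_Ioc)) (Filter.tendsto_id (α := ℝ)) ?_
    filter_upwards [Filter.Iic_mem_atBot (0:ℝ)] with i (hi : i ≤ 0)
    have hInt1 : IntervalIntegrable (fun x => ‖Real.exp (2 * r * x) * h x‖)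
        MeasureTheory.volume i 0 := hcont.norm.intervalIntegrable _ _
    have hInt2 : IntervalIntegrable (fun x => M' * Real.exp (2 * r * x))
        MeasureTheory.volume i 0 :=
      (continuous_const.mul (Real.continuous_exp.comp
        (continuous_const.mul continuous_id))).intervalIntegrable _ _
    have hle : ∫ x in i..0, ‖Real.exp (2 * r * x) * h x‖ ≤
        ∫ x in i..0, M' * Real.exp (2 * r * x) := by
      apply intervalIntegral.integral_mono_on hi hInt1 hInt2
      intro x hx
      have hx0 : x ≤ 0 := hx.2
      rw [norm_mul, Real.norm_eq_abs, Real.norm_eq_abs,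
        abs_of_pos (Real.exp_pos _), mul_comm]
      exact mul_le_mul_of_nonneg_right (hMb x hx0) (Real.exp_pos _).le
    have hcalc : ∫ x in i..0, M' * Real.exp (2 * r * x) =
        M' * (Real.exp 0 / (2 * r) - Real.exp (2 * r * i) / (2 * r)) := by
      rw [intervalIntegral.integral_const_mul]
      have := intervalIntegral.integral_eq_sub_of_hasDerivAt
        (f := fun t => Real.exp (2 * r * t) / (2 * r))
        (fun x _ => Dexp' x)
        (((Real.continuous_exp.comp (continuous_const.mul
          continuous_id)).intervalIntegrable i 0))
      rw [this]
      norm_num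
    refine hle.trans ?_
    rw [hcalc]
    have h1 : Real.exp 0 / (2 * r) - Real.exp (2 * r * i) / (2 * r) ≤ 1 / (2 * r) := by
      rw [Real.exp_zero]
      have := (Real.exp_pos (2 * r * i)).le
      have : 0 ≤ Real.exp (2 * r * i) / (2 * r) := div_nonneg this hr2.le
      linarith
    calc M' * (Real.exp 0 / (2 * r) - Real.exp (2 * r * i) / (2 * r))
        ≤ M' * (1 / (2 * r)) := mul_le_mul_of_nonneg_left h1 hM'0
      _ = M' / (2 * r) := by ring
  refine ⟨hint, ?_⟩
  -- the antiderivative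
  have DF : ∀ x : ℝ, HasDerivAt (fun t => Real.exp (2 * r * t) * y t / 2)
      (Real.exp (2 * r * x) * h x) x := by
    intro x
    have := ((Dexp x).mul (hy x).hasDerivAt).div_const 2
    have hx : Real.exp (2 * r * x) * h x =
        (2 * r * Real.exp (2 * r * x) * y x + Real.exp (2 * r * x) * deriv y x) / 2 := by
      rw [← heq x]; ring
    rw [hx]
    exact this
  -- the limit at -∞
  have hlim : Filter.Tendsto (fun t => Real.exp (2 * r * t) * y t / 2)
      Filter.atBot (nhds 0) := by
    have hb : Filter.Tendsto (fun t => N / 2 * Real.exp (2 * r * t))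
        Filter.atBot (nhds 0) := by
      have : Filter.Tendsto (fun t : ℝ => 2 * r * t) Filter.atBot Filter.atBot :=
        Filter.tendsto_id.const_mul_atBot hr2
      simpa using (Real.tendsto_exp_atBot.comp this).const_mul (N / 2)
    refine squeeze_zero_norm' ?_ hb
    filter_upwards [Filter.Iic_mem_atBot (0:ℝ)] with t (ht : t ≤ 0)
    rw [Real.norm_eq_abs, abs_div, abs_mul, abs_of_pos (Real.exp_pos _)]
    have : |y t| ≤ N := hN t ht
    have hN0 : 0 ≤ N := (abs_nonneg _).trans this
    calc Real.exp (2 * r * t) * |y t| / |(2:ℝ)|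
        = Real.exp (2 * r * t) * |y t| / 2 := by norm_num
      _ ≤ Real.exp (2 * r * t) * N / 2 := by
          have := mul_le_mul_of_nonneg_left this (Real.exp_pos (2 * r * t)).le
          linarith
      _ = N / 2 * Real.exp (2 * r * t) := by ring
  have := MeasureTheory.integral_Iic_of_hasDerivAt_of_tendsto'
    (fun x _ => DF x) hint hlim
  rw [this]
  simp
  ring
end
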